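/- Define the bounded operator 𝓐 : H × H → H × H by 𝓐(u, v) = (v, −Pu − Q*(Qv)). Let λ ∈ ℂ with λ ≠ 0. If the operator P_λ : H → H given by P_λu = Pu − iλ·Q*(Qu) − λ²u is bijective, then the operator 𝓐 + iλ·Id is bijective on H × H. -/

import Mathlib

/-- Lemma 3.10(1) (bounded-operator form): if the damped pencil
`P_λ u = Pu − iλ Q*(Qu) − λ²u` is bijective for `λ ≠ 0`, then the block operator
`𝓐 + iλ·Id` is bijective on `H × H`, where `𝓐(u, v) = (v, −Pu − Q*(Qv))`. -/
theorem generator_shift_bijective_of_pencil_bijective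
    {H Y : Type*} [NormedAddCommGroup H] [InnerProductSpace ℂ H] [CompleteSpace H]
    [NormedAddCommGroup Y] [InnerProductSpace ℂ Y] [CompleteSpace Y]
    (P : H →L[ℂ] H) (hP : IsSelfAdjoint P)
    (hPnn : ∀ u : H, 0 ≤ (inner ℂ (P u) u : ℂ).re)
    (Q : H →L[ℂ] Y)
    (lam : ℂ) (hlam : lam ≠ 0)
    (hbij : Function.Bijective (fun u : H =>
      P u - (Complex.I * lam) • (ContinuousLinearMap.adjoint Q) (Q u) - (lam ^ 2) • u)) :
    Function.Bijective (fun p : H × H =>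
      ((p.2, -P p.1 - (ContinuousLinearMap.adjoint Q) (Q p.2)) : H × H)
        + (Complex.I * lam) • p) := by
  set A := ContinuousLinearMap.adjoint Q with hA
  have hsq : (Complex.I * lam) * (Complex.I * lam) = -(lam ^ 2) := by
    have := Complex.I_mul_I
    ring_nf
    rw [Complex.I_sq]
    ring
  constructor
  · intro p q h
    have h1 : p.2 + (Complex.I * lam) • p.1 = q.2 + (Complex.I * lam) • q.1 :=
      congrArg Prod.fst h
    have h2 : -P p.1 - A (Q p.2) + (Complex.I * lam) • p.2
        = -P q.1 - A (Q q.2) + (Complex.I * lam) • q.2 :=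
      congrArg Prod.snd h
    have hv : p.2 = q.2 + (Complex.I * lam) • (q.1 - p.1) := by
      rw [smul_sub]
      linear_combination (norm := abel) h1
    have key : P p.1 - (Complex.I * lam) • A (Q p.1) - (lam ^ 2) • p.1
        = P q.1 - (Complex.I * lam) • A (Q q.1) - (lam ^ 2) • q.1 := by
      rw [hv] at h2
      simp only [map_add, map_sub, map_smul, smul_add, smul_sub, smul_smul, hsq,
        neg_smul] at h2
      have hP' : P p.1 = P q.1 + (Complex.I * lam) • A (Q p.1)
          - (Complex.I * lam) • A (Q q.1) - (lam ^ 2) • q.1 + (lam ^ 2) • p.1 := by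
        linear_combination (norm := abel) -h2
      rw [hP']
      abel
    have hu : p.1 = q.1 := hbij.1 key
    have hv2 : p.2 = q.2 := by rw [hv, hu]; simp
    exact Prod.ext hu hv2
  · rintro ⟨f, g⟩
    obtain ⟨u, hu⟩ := hbij.2 ((Complex.I * lam) • f - A (Q f) - g)
    refine ⟨(u, f - (Complex.I * lam) • u), ?_⟩
    simp only at hu ⊢
    refine Prod.ext ?_ ?_
    · show (f - (Complex.I * lam) • u) + (Complex.I * lam) • u = f
      abel
    · show -P u - A (Q (f - (Complex.I * lam) • u))
        + (Complex.I * lam) • (f - (Complex.I * lam) • u) = g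
      simp only [map_sub, map_smul, smul_sub, smul_smul, hsq, neg_smul]
      linear_combination (norm := abel) -hu
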